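/- Let A be the 0-1 matrix over the positive integers defined by A(i,j) = 1 if and only if i = 1 or j ∈ {i−1, i, i+2, i+3, i+5, i+6}. Then (a) every column set ρ_A^{-1}(j) = {i : A(i,j) = 1} has at most 7 elements, and there exists j for which it has exactly 7 elements (so M_A = 7); and (b) any two distinct elements of {2,3,4,5,6,7,8,9} belong to a common column set ρ_A^{-1}(k) for some positive integer k, and consequently every A-orthogonal division of the positive integers has at least 8 parts. -/
import Mathlib

set_option linter.unreachableTactic false
set_option linter.unusedTactic false

/-- An `A`-orthogonal division: a partition of the positive integers into `m` parts
`H 0, …, H (m-1)` such that `|ρ_A^{-1}(k) ∩ H l| ≤ 1` for every `k` and every part `l`,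
where `ρ_A^{-1}(k) = {j : A(j,k) = 1}`. -/
def IsOrthDiv (A : ℕ+ → ℕ+ → Bool) (m : ℕ) (H : Fin m → Set ℕ+) : Prop :=
  (∀ x : ℕ+, ∃! l : Fin m, x ∈ H l) ∧
  ∀ (k : ℕ+) (l : Fin m), ({j : ℕ+ | A j k = true} ∩ H l).encard ≤ 1

/-- The matrix of Example: `A(i,j) = 1` iff `i = 1` or `j ∈ {i−1, i, i+2, i+3, i+5, i+6}`. -/
def exMat (i j : ℕ+) : Bool :=
  decide (i = 1 ∨ (j : ℕ) + 1 = (i : ℕ) ∨ j = i ∨ (j : ℕ) = (i : ℕ) + 2 ∨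
    (j : ℕ) = (i : ℕ) + 3 ∨ (j : ℕ) = (i : ℕ) + 5 ∨ (j : ℕ) = (i : ℕ) + 6)

lemma partc' : ∀ a b : ℕ+, a ∈ ({2, 3, 4, 5, 6, 7, 8, 9} : Set ℕ+) →
      b ∈ ({2, 3, 4, 5, 6, 7, 8, 9} : Set ℕ+) → a ≠ b →
      ∃ k : ℕ+, exMat a k = true ∧ exMat b k = true := by
  intro a b ha hb hab
  simp only [Set.mem_insert_iff, Set.mem_singleton_iff] at ha hb
  rcases ha with rfl|rfl|rfl|rfl|rfl|rfl|rfl|rfl <;>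
    rcases hb with rfl|rfl|rfl|rfl|rfl|rfl|rfl|rfl <;>
    first
      | exact absurd rfl hab
      | exact ⟨3, by decide, by decide⟩ | exact ⟨4, by decide, by decide⟩ | exact ⟨5, by decide, by decide⟩ | exact ⟨6, by decide, by decide⟩ | exact ⟨7, by decide, by decide⟩ | exact ⟨8, by decide, by decide⟩ | exact ⟨9, by decide, by decide⟩ | exact ⟨10, by decide, by decide⟩ | exact ⟨11, by decide, by decide⟩ | exact ⟨12, by decide, by decide⟩ | exact ⟨13, by decide, by decide⟩ | exact ⟨14, by decide, by decide⟩ | exact ⟨15, by decide, by decide⟩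

/-- for the matrix `A(i,j) = 1 ⟺ i = 1 ∨ j ∈ {i−1,i,i+2,i+3,i+5,i+6}`:
(a) every column set `ρ_A^{-1}(k) = {i : A(i,k) = 1}` has at most `7` elements and some
column set has exactly `7` elements (so `M_A = 7`); (b) any two distinct elements of
`{2,…,9}` lie in a common column set, and consequently every `A`-orthogonal division
of the positive integers has at least `8` parts. -/
theorem stmt12 :
    (∀ k : ℕ+, {i : ℕ+ | exMat i k = true}.encard ≤ 7) ∧
    (∃ k : ℕ+, {i : ℕ+ | exMat i k = true}.encard = 7) ∧
    (∀ a b : ℕ+, a ∈ ({2, 3, 4, 5, 6, 7, 8, 9} : Set ℕ+) →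
      b ∈ ({2, 3, 4, 5, 6, 7, 8, 9} : Set ℕ+) → a ≠ b →
      ∃ k : ℕ+, exMat a k = true ∧ exMat b k = true) ∧
    (∀ (m : ℕ) (H : Fin m → Set ℕ+), IsOrthDiv exMat m H → 8 ≤ m) := by
  refine ⟨?_, ?_, partc', ?_⟩
  · -- every column has at most 7 elements
    intro k
    have step : ∀ {s t : Set ℕ+} {n : ℕ∞}, t.encard ≤ n → s.encard ≤ 1 →
        (t ∪ s).encard ≤ n + 1 := fun ht hs => (Set.encard_union_le _ _).trans (add_le_add ht hs)
    have hcoe : ∀ c : ℕ, ({i : ℕ+ | c = (i : ℕ)} : Set ℕ+).encard ≤ 1 := by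
      intro c
      apply Set.encard_le_one_iff.mpr
      intro x y hx hy
      exact PNat.coe_injective (hx.symm.trans hy)
    have hadd : ∀ c : ℕ, ({i : ℕ+ | (k : ℕ) = (i : ℕ) + c} : Set ℕ+).encard ≤ 1 := by
      intro c
      apply Set.encard_le_one_iff.mpr
      intro x y hx hy
      simp only [Set.mem_setOf_eq] at hx hy
      exact PNat.coe_injective (by omega)
    have hone : ({i : ℕ+ | i = 1} : Set ℕ+).encard ≤ 1 := by
      apply Set.encard_le_one_iff.mpr
      intro x y hx hy
      simp only [Set.mem_setOf_eq] at hx hy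
      rw [hx, hy]
    have hk : ({i : ℕ+ | k = i} : Set ℕ+).encard ≤ 1 := by
      apply Set.encard_le_one_iff.mpr
      intro x y hx hy
      simp only [Set.mem_setOf_eq] at hx hy
      rw [← hx, ← hy]
    have hsub : {i : ℕ+ | exMat i k = true} ⊆
        {i : ℕ+ | i = 1} ∪ {i : ℕ+ | (k : ℕ) + 1 = (i : ℕ)} ∪ {i : ℕ+ | k = i} ∪
        {i : ℕ+ | (k : ℕ) = (i : ℕ) + 2} ∪ {i : ℕ+ | (k : ℕ) = (i : ℕ) + 3} ∪
        {i : ℕ+ | (k : ℕ) = (i : ℕ) + 5} ∪ {i : ℕ+ | (k : ℕ) = (i : ℕ) + 6} := by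
      intro i hi
      simp only [exMat, Set.mem_setOf_eq, decide_eq_true_eq] at hi
      simp only [Set.mem_union, Set.mem_setOf_eq]
      rcases hi with h|h|h|h|h|h|h
      · tauto
      · tauto
      · exact Or.inl (Or.inl (Or.inl (Or.inl (Or.inr h))))
      · tauto
      · tauto
      · tauto
      · tauto
    refine (Set.encard_le_encard hsub).trans ?_
    have : ((({i : ℕ+ | i = 1} ∪ {i : ℕ+ | (k : ℕ) + 1 = (i : ℕ)} ∪ {i : ℕ+ | k = i} ∪
        {i : ℕ+ | (k : ℕ) = (i : ℕ) + 2} ∪ {i : ℕ+ | (k : ℕ) = (i : ℕ) + 3} ∪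
        {i : ℕ+ | (k : ℕ) = (i : ℕ) + 5} ∪ {i : ℕ+ | (k : ℕ) = (i : ℕ) + 6}) : Set ℕ+)).encard
        ≤ 1 + 1 + 1 + 1 + 1 + 1 + 1 :=
      step (step (step (step (step (step hone (hcoe _)) hk) (hadd 2)) (hadd 3)) (hadd 5)) (hadd 6)
    exact this.trans_eq (by norm_num)
  · -- some column has exactly 7 elements
    refine ⟨8, ?_⟩
    have hset : {i : ℕ+ | exMat i 8 = true} = ({1, 2, 3, 5, 6, 8, 9} : Set ℕ+) := by
      ext i
      simp only [exMat, Set.mem_setOf_eq, decide_eq_true_eq, Set.mem_insert_iff,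
        Set.mem_singleton_iff, ← PNat.coe_inj, PNat.mk_ofNat, PNat.val_ofNat, PNat.one_coe]
      have := i.pos
      omega
    rw [hset,
      show ({1, 2, 3, 5, 6, 8, 9} : Set ℕ+) = (({1, 2, 3, 5, 6, 8, 9} : Finset ℕ+) : Set ℕ+)
        by simp, Set.encard_coe_eq_coe_finsetCard]
    decide
  · -- every orthogonal division has at least 8 parts
    intro m H hOD
    set e : Fin 8 → ℕ+ := ![2, 3, 4, 5, 6, 7, 8, 9] with he
    have hemem : ∀ i : Fin 8, e i ∈ ({2, 3, 4, 5, 6, 7, 8, 9} : Set ℕ+) := by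
      intro i
      simp only [Set.mem_insert_iff, Set.mem_singleton_iff]; fin_cases i <;> decide
    have heinj : Function.Injective e := by decide
    choose f hf using fun i : Fin 8 => (hOD.1 (e i)).exists
    have hfinj : Function.Injective f := by
      intro i j hij
      by_contra hne
      have hab : e i ≠ e j := fun h => hne (heinj h)
      obtain ⟨k, hk1, hk2⟩ := partc' (e i) (e j) (hemem i) (hemem j) hab
      have h1 : e i ∈ {j : ℕ+ | exMat j k = true} ∩ H (f i) := ⟨hk1, hf i⟩
      have h2 : e j ∈ {j : ℕ+ | exMat j k = true} ∩ H (f i) := ⟨hk2, hij ▸ hf j⟩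
      exact hab (Set.encard_le_one_iff.mp (hOD.2 k (f i)) _ _ h1 h2)
    have := Fintype.card_le_of_injective f hfinj
    simpa using this
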